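/- Let Γ be a finite simple graph and let v_i, v_j be vertices with d(v_i, v_j) ≥ 2. A set R of vertices is simultaneously a connected component of Γ \ S_i and of Γ \ S_j if and only if R is a connected component of Γ \ (L_i ∩ L_j) with v_i ∉ R and v_j ∉ R. -/

import Mathlib

def gstar {V : Type*} (G : SimpleGraph V) (v : V) : Set V := {u | u = v ∨ G.Adj v u}

def glink {V : Type*} (G : SimpleGraph V) (v : V) : Set V := {u | G.Adj v u}

def IsCompOf {V : Type*} (G : SimpleGraph V) (s K : Set V) : Prop :=
  K.Nonempty ∧ K ⊆ s ∧ (G.induce K).Connected ∧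
    ∀ K' : Set V, K ⊆ K' → K' ⊆ s → (G.induce K').Connected → K' = K

private lemma singleton_connected {V : Type*} (G : SimpleGraph V) (u : V) :
    (G.induce {u}).Connected := by
  rw [SimpleGraph.connected_iff]
  refine ⟨fun a b => ?_, ⟨⟨u, rfl⟩⟩⟩
  have h : a = b := Subtype.ext (a.2.trans b.2.symm)
  rw [h]

private lemma insert_connected {V : Type*} {G : SimpleGraph V} {K : Set V} {u r : V}
    (hK : (G.induce K).Connected) (hr : r ∈ K) (hadj : G.Adj u r) :
    (G.induce (insert u K)).Connected := by
  have h : insert u K = K ∪ {u} := by ext x; simp [or_comm]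
  rw [h]
  exact SimpleGraph.connected_induce_union hK.preconnected (singleton_connected G u).preconnected hr rfl hadj.symm

private lemma boundary {V : Type*} {G : SimpleGraph V} {K' R : Set V}
    {a b : K'} (p : (G.induce K').Walk a b) :
    (a : V) ∉ R → (b : V) ∈ R → ∃ u ∈ K', u ∉ R ∧ ∃ v ∈ R, G.Adj u v := by
  induction p with
  | nil => intro ha hb; exact absurd hb ha
  | @cons x c y h q ih =>
    intro ha hb
    by_cases hc : (c : V) ∈ R
    · exact ⟨x, x.2, ha, c, hc, h⟩
    · exact ih hc hb

theorem stmt4 {V : Type*} [Fintype V] (G : SimpleGraph V) (i j : V)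
    (hne : i ≠ j) (hnadj : ¬ G.Adj i j) (R : Set V) :
    (IsCompOf G ((gstar G i)ᶜ) R ∧ IsCompOf G ((gstar G j)ᶜ) R) ↔
      (IsCompOf G ((glink G i ∩ glink G j)ᶜ) R ∧ i ∉ R ∧ j ∉ R) := by
  constructor
  · rintro ⟨⟨hRne, hsubi, hconn, hmaxi⟩, ⟨-, hsubj, -, hmaxj⟩⟩
    have hiR : i ∉ R := fun h => (hsubi h) (Or.inl rfl)
    have hjR : j ∉ R := fun h => (hsubj h) (Or.inl rfl)
    refine ⟨⟨hRne, fun u hu h => (hsubi hu) (Or.inr h.1), hconn, ?_⟩, hiR, hjR⟩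
    intro K' hRK' hK'sub hK'conn
    refine Set.Subset.antisymm ?_ hRK'
    by_contra hnsub
    obtain ⟨x, hxK', hxR⟩ := Set.not_subset.mp hnsub
    obtain ⟨r, hr⟩ := hRne
    obtain ⟨p⟩ := hK'conn.preconnected ⟨x, hxK'⟩ ⟨r, hRK' hr⟩
    obtain ⟨u, huK', huR, v, hvR, huv⟩ := boundary p hxR hr
    have key : ∀ w : V, w ∉ R → (∃ s ∈ R, G.Adj w s) → w ∈ gstar G i ∧ w ∈ gstar G j := by
      intro w hwR ⟨s, hsR, hws⟩
      constructor
      · by_contra hw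
        have := hmaxi (insert w R) (Set.subset_insert _ _)
          (Set.insert_subset hw hsubi) (insert_connected hconn hsR hws)
        exact hwR (this ▸ Set.mem_insert w R)
      · by_contra hw
        have := hmaxj (insert w R) (Set.subset_insert _ _)
          (Set.insert_subset hw hsubj) (insert_connected hconn hsR hws)
        exact hwR (this ▸ Set.mem_insert w R)
    obtain ⟨hui, huj⟩ := key u huR ⟨v, hvR, huv⟩
    rcases hui with rfl | hui
    · rcases huj with h | h
      · exact hne h
      · exact hnadj h.symm
    rcases huj with rfl | huj
    · exact hnadj hui
    exact (hK'sub huK') ⟨hui, huj⟩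
  · rintro ⟨⟨hRne, hsub, hconn, hmax⟩, hiR, hjR⟩
    have hnoi : ∀ u ∈ R, ¬ G.Adj i u := by
      intro u hu hadj
      have hins : insert i R ⊆ (glink G i ∩ glink G j)ᶜ := by
        refine Set.insert_subset (fun h => G.irrefl h.1) hsub
      have := hmax (insert i R) (Set.subset_insert _ _) hins
        (insert_connected hconn hu hadj)
      exact hiR (this ▸ Set.mem_insert i R)
    have hnoj : ∀ u ∈ R, ¬ G.Adj j u := by
      intro u hu hadj
      have hins : insert j R ⊆ (glink G i ∩ glink G j)ᶜ := by
        refine Set.insert_subset (fun h => G.irrefl h.2) hsub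
      have := hmax (insert j R) (Set.subset_insert _ _) hins
        (insert_connected hconn hu hadj)
      exact hjR (this ▸ Set.mem_insert j R)
    have hsubi : R ⊆ (gstar G i)ᶜ := by
      intro u hu h
      rcases h with rfl | h
      · exact hiR hu
      · exact hnoi u hu h
    have hsubj : R ⊆ (gstar G j)ᶜ := by
      intro u hu h
      rcases h with rfl | h
      · exact hjR hu
      · exact hnoj u hu h
    have hstar_i : (gstar G i)ᶜ ⊆ (glink G i ∩ glink G j)ᶜ :=
      fun u hu h => hu (Or.inr h.1)
    have hstar_j : (gstar G j)ᶜ ⊆ (glink G i ∩ glink G j)ᶜ :=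
      fun u hu h => hu (Or.inr h.2)
    exact ⟨⟨hRne, hsubi, hconn, fun K' h1 h2 h3 => hmax K' h1 (h2.trans hstar_i) h3⟩,
      ⟨hRne, hsubj, hconn, fun K' h1 h2 h3 => hmax K' h1 (h2.trans hstar_j) h3⟩⟩
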